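/- For T ∈ SL(n) (invertible linear map with |det T| = 1), any continuous positive function φ : (0,∞) → (0,∞), and star bodies K, L in ℝⁿ, the Orlicz L_φ-dual mixed volume is invariant: Ṽ_φ(TK, TL) = Ṽ_φ(K, L). -/

import Mathlib

noncomputable section

open Metric Set MeasureTheory Filter

/-- A star body about the origin in `ℝⁿ`, represented by its radial function,
which is continuous and positive on the unit sphere. -/
structure StarBody (n : ℕ) where
  ρ : EuclideanSpace ℝ (Fin n) → ℝ
  pos : ∀ u : EuclideanSpace ℝ (Fin n), ‖u‖ = 1 → 0 < ρ u
  cont : ContinuousOn ρ (sphere (0 : EuclideanSpace ℝ (Fin n)) 1)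

/-- `M` is the Orlicz `φ`-radial addition `K +̃_φ L`, i.e.
`φ(ρ_M(u)/ρ_K(u), ρ_M(u)/ρ_L(u)) = 1` for all `u` on the unit sphere. -/
def IsOrliczSum {n : ℕ} (φ : ℝ → ℝ → ℝ) (K L M : StarBody n) : Prop :=
  ∀ u : EuclideanSpace ℝ (Fin n), ‖u‖ = 1 →
    φ (M.ρ u / K.ρ u) (M.ρ u / L.ρ u) = 1

/-- The spherical Lebesgue measure on the unit sphere `S^{n-1}`. -/
def sphereMeasure (n : ℕ) : Measure (sphere (0 : EuclideanSpace ℝ (Fin n)) 1) :=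
  (volume : Measure (EuclideanSpace ℝ (Fin n))).toSphere

/-- The volume of a star body via the polar coordinate formula
`|K| = (1/n) ∫_{S^{n-1}} ρ_K(u)ⁿ dσ(u)`. -/
def StarBody.vol {n : ℕ} (K : StarBody n) : ℝ :=
  (1 / (n : ℝ)) * ∫ u : sphere (0 : EuclideanSpace ℝ (Fin n)) 1,
    (K.ρ u) ^ n ∂(sphereMeasure n)

/-- The Orlicz `L_φ`-dual mixed volume
`Ṽ_φ(K,L) = (1/n) ∫_{S^{n-1}} φ(ρ_K(u)/ρ_L(u)) ρ_K(u)ⁿ dσ(u)`. -/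
def dualMixedVolume {n : ℕ} (φ : ℝ → ℝ) (K L : StarBody n) : ℝ :=
  (1 / (n : ℝ)) * ∫ u : sphere (0 : EuclideanSpace ℝ (Fin n)) 1,
    φ (K.ρ u / L.ρ u) * (K.ρ u) ^ n ∂(sphereMeasure n)

/-- `K'` is the image `T K` of the star body `K` under the invertible linear map `T`,
expressed via radial functions: `ρ_{TK}(u) ‖T⁻¹u‖ = ρ_K(T⁻¹u / ‖T⁻¹u‖)`. -/
def IsLinearImage {n : ℕ} (T : EuclideanSpace ℝ (Fin n) ≃ₗ[ℝ] EuclideanSpace ℝ (Fin n))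
    (K K' : StarBody n) : Prop :=
  ∀ u : EuclideanSpace ℝ (Fin n), ‖u‖ = 1 →
    K'.ρ u * ‖T.symm u‖ = K.ρ (‖T.symm u‖⁻¹ • T.symm u)


open scoped Classical in
/-- Auxiliary full-space integrand for the polar-coordinates representation of the
Orlicz dual mixed volume. -/
def gaux (n : ℕ) (φ : ℝ → ℝ) (ρK ρL : EuclideanSpace ℝ (Fin n) → ℝ)
    (x : EuclideanSpace ℝ (Fin n)) : ℝ :=
  if x ≠ 0 ∧ ‖x‖ < ρK (‖x‖⁻¹ • x) then φ (ρK (‖x‖⁻¹ • x) / ρL (‖x‖⁻¹ • x)) else 0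

open scoped Classical in
/-- The same integrand, seen on the product `S^{n-1} × (0, ∞)`. -/
def Gaux (n : ℕ) (φ : ℝ → ℝ) (ρK ρL : EuclideanSpace ℝ (Fin n) → ℝ)
    (p : sphere (0 : EuclideanSpace ℝ (Fin n)) 1 × Set.Ioi (0:ℝ)) : ℝ :=
  if (p.2 : ℝ) < ρK p.1 then φ (ρK p.1 / ρL p.1) else 0

lemma Gaux_comp_homeo (n : ℕ) (φ : ℝ → ℝ) (ρK ρL : EuclideanSpace ℝ (Fin n) → ℝ)
    (x : ({0}ᶜ : Set (EuclideanSpace ℝ (Fin n)))) :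
    Gaux n φ ρK ρL (homeomorphUnitSphereProd (EuclideanSpace ℝ (Fin n)) x) =
      gaux n φ ρK ρL x.1 := by
  have hx : (x : EuclideanSpace ℝ (Fin n)) ≠ 0 := x.2
  simp [Gaux, gaux, hx]

lemma StarBody.rho_pos' {n : ℕ} (K : StarBody n)
    (u : sphere (0 : EuclideanSpace ℝ (Fin n)) 1) : 0 < K.ρ u :=
  K.pos u (mem_sphere_zero_iff_norm.1 u.2)

lemma integrable_Gaux {n : ℕ} (φ : ℝ → ℝ)
    (hφc : ContinuousOn φ (Set.Ioi 0)) (K L : StarBody n) :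
    Integrable (Gaux n φ K.ρ L.ρ)
      ((sphereMeasure n).prod (Measure.volumeIoiPow (n-1))) := by
  haveI : IsFiniteMeasure (sphereMeasure n) :=
    inferInstanceAs (IsFiniteMeasure ((volume : Measure (EuclideanSpace ℝ (Fin n))).toSphere))
  set μ := (sphereMeasure n).prod (Measure.volumeIoiPow (n-1)) with hμ
  have hρKc : Continuous (fun u : sphere (0 : EuclideanSpace ℝ (Fin n)) 1 => K.ρ u) :=
    K.cont.restrict
  have hρLc : Continuous (fun u : sphere (0 : EuclideanSpace ℝ (Fin n)) 1 => L.ρ u) :=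
    L.cont.restrict
  set F : sphere (0 : EuclideanSpace ℝ (Fin n)) 1 × Set.Ioi (0:ℝ) → ℝ :=
    fun p => φ (K.ρ p.1 / L.ρ p.1) with hF
  set A : Set (sphere (0 : EuclideanSpace ℝ (Fin n)) 1 × Set.Ioi (0:ℝ)) :=
    {p | (p.2 : ℝ) < K.ρ p.1} with hA
  have hAopen : IsOpen A :=
    isOpen_lt (continuous_subtype_val.comp continuous_snd) (hρKc.comp continuous_fst)
  have hFc : Continuous F := by
    refine hφc.comp_continuous ?_ ?_
    · exact (hρKc.comp continuous_fst).div (hρLc.comp continuous_fst)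
        (fun p => (L.rho_pos' p.1).ne')
    · exact fun p => div_pos (K.rho_pos' p.1) (L.rho_pos' p.1)
  have hGA : Gaux n φ K.ρ L.ρ = A.indicator F := by
    funext p
    simp only [Gaux, Set.indicator_apply, hA, Set.mem_setOf_eq, hF]
  rw [hGA, integrable_indicator_iff hAopen.measurableSet]
  obtain ⟨R, hR⟩ := (isCompact_sphere (0 : EuclideanSpace ℝ (Fin n)) 1).exists_bound_of_continuousOn K.cont
  set R' : ℝ := max R 0 + 1 with hR'
  have hR'pos : 0 < R' := by positivity
  have hAsub : A ⊆ Set.univ ×ˢ Set.Iio (⟨R', hR'pos⟩ : Set.Ioi (0:ℝ)) := by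
    rintro ⟨u, r⟩ hp
    refine ⟨trivial, ?_⟩
    simp only [Set.mem_Iio, Subtype.mk_lt_mk] at *
    have h1 : (r : ℝ) < K.ρ u := hp
    have h2 : K.ρ u ≤ ‖K.ρ (u : EuclideanSpace ℝ (Fin n))‖ := le_abs_self _
    have h3 := hR u u.2
    show (r : ℝ) < R'
    have : K.ρ u ≤ max R 0 := le_trans h2 (le_trans h3 (le_max_left _ _))
    calc (r : ℝ) < K.ρ u := h1
      _ ≤ max R 0 := this
      _ < R' := lt_add_one _
  have hAfin : μ A ≠ ⊤ := by
    refine ne_top_of_le_ne_top ?_ (measure_mono hAsub)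
    rw [hμ, Measure.prod_prod, Measure.volumeIoiPow_apply_Iio]
    exact (ENNReal.mul_lt_top (measure_lt_top _ _) ENNReal.ofReal_lt_top).ne
  obtain ⟨C, hC⟩ := (isCompact_sphere (0 : EuclideanSpace ℝ (Fin n)) 1).exists_bound_of_continuousOn
    (show ContinuousOn (fun x : EuclideanSpace ℝ (Fin n) => φ (K.ρ x / L.ρ x))
        (sphere (0 : EuclideanSpace ℝ (Fin n)) 1) from
      hφc.comp ((K.cont.div L.cont)
        (fun x hx => (L.pos x (mem_sphere_zero_iff_norm.1 hx)).ne'))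
        (fun x hx => div_pos (K.pos x (mem_sphere_zero_iff_norm.1 hx))
          (L.pos x (mem_sphere_zero_iff_norm.1 hx))))
  exact Measure.integrableOn_of_bounded hAfin hFc.aestronglyMeasurable
    (Filter.Eventually.of_forall fun p => hC p.1 p.1.2)

lemma integral_gaux {n : ℕ} (hn : 0 < n) (φ : ℝ → ℝ)
    (hφc : ContinuousOn φ (Set.Ioi 0)) (K L : StarBody n) :
    ∫ x, gaux n φ K.ρ L.ρ x = dualMixedVolume φ K L := by
  have hfin : Module.finrank ℝ (EuclideanSpace ℝ (Fin n)) = n := finrank_euclideanSpace_fin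
  haveI : Nontrivial (EuclideanSpace ℝ (Fin n)) :=
    Module.nontrivial_of_finrank_pos (by rw [hfin]; exact hn)
  have hsub : n - 1 + 1 = n := Nat.sub_add_cancel hn
  have hcast : ((n - 1 : ℕ) : ℝ) + 1 = (n : ℝ) := by
    rw [← Nat.cast_add_one, hsub]
  haveI : IsFiniteMeasure (sphereMeasure n) :=
    inferInstanceAs (IsFiniteMeasure ((volume : Measure (EuclideanSpace ℝ (Fin n))).toSphere))
  have hmeas : (sphereMeasure n).prod (Measure.volumeIoiPow (n - 1)) =
      (volume : Measure (EuclideanSpace ℝ (Fin n))).toSphere.prod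
        (Measure.volumeIoiPow (Module.finrank ℝ (EuclideanSpace ℝ (Fin n)) - 1)) := by
    rw [hfin]; rfl
  calc ∫ x, gaux n φ K.ρ L.ρ x
      = ∫ x in ({0}ᶜ : Set (EuclideanSpace ℝ (Fin n))), gaux n φ K.ρ L.ρ x := by
        rw [restrict_compl_singleton]
    _ = ∫ x : ({0}ᶜ : Set (EuclideanSpace ℝ (Fin n))), gaux n φ K.ρ L.ρ x.1
          ∂(Measure.comap Subtype.val volume) :=
        (integral_subtype_comap (measurableSet_singleton 0).compl _).symm
    _ = ∫ p, Gaux n φ K.ρ L.ρ p ∂((sphereMeasure n).prod (Measure.volumeIoiPow (n - 1))) := by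
        rw [hmeas, ← (volume.measurePreserving_homeomorphUnitSphereProd).integral_comp
          (Homeomorph.measurableEmbedding _) (Gaux n φ K.ρ L.ρ)]
        exact integral_congr_ae (Filter.Eventually.of_forall fun x =>
          (Gaux_comp_homeo n φ K.ρ L.ρ x).symm)
    _ = ∫ u, (∫ r, Gaux n φ K.ρ L.ρ (u, r) ∂(Measure.volumeIoiPow (n - 1)))
          ∂(sphereMeasure n) :=
        integral_prod _ (integrable_Gaux φ hφc K L)
    _ = ∫ u, φ (K.ρ u / L.ρ u) * ((K.ρ u) ^ n / n) ∂(sphereMeasure n) := by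
        refine integral_congr_ae (Filter.Eventually.of_forall fun u => ?_)
        show (∫ r : Set.Ioi (0:ℝ), Gaux n φ K.ρ L.ρ (u, r) ∂(Measure.volumeIoiPow (n - 1)))
          = φ (K.ρ u / L.ρ u) * ((K.ρ u) ^ n / n)
        have hρ : 0 < K.ρ u := K.rho_pos' u
        have h1 : (fun r : Set.Ioi (0:ℝ) => Gaux n φ K.ρ L.ρ (u, r)) =
            Set.indicator (Set.Iio (⟨K.ρ u, hρ⟩ : Set.Ioi (0:ℝ)))
              (fun _ => φ (K.ρ u / L.ρ u)) := by
          funext r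
          simp only [Gaux, Set.indicator_apply, Set.mem_Iio, Subtype.mk_lt_mk]
          rfl
        rw [h1, integral_indicator measurableSet_Iio, setIntegral_const, Measure.real_def,
          Measure.volumeIoiPow_apply_Iio, hsub, hcast,
          ENNReal.toReal_ofReal (by positivity)]
        rw [smul_eq_mul, mul_comm]
    _ = dualMixedVolume φ K L := by
        rw [dualMixedVolume]
        rw [show (fun u : sphere (0 : EuclideanSpace ℝ (Fin n)) 1 =>
            φ (K.ρ u / L.ρ u) * ((K.ρ u) ^ n / n)) =
            (fun u : sphere (0 : EuclideanSpace ℝ (Fin n)) 1 =>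
            (1 / (n : ℝ)) * (φ (K.ρ u / L.ρ u) * (K.ρ u) ^ n)) from
          funext fun u => by ring]
        rw [integral_const_mul]

lemma gaux_comp_symm {n : ℕ} (φ : ℝ → ℝ)
    (T : EuclideanSpace ℝ (Fin n) ≃ₗ[ℝ] EuclideanSpace ℝ (Fin n))
    (K L K' L' : StarBody n)
    (hK : IsLinearImage T K K') (hL : IsLinearImage T L L')
    (x : EuclideanSpace ℝ (Fin n)) :
    gaux n φ K'.ρ L'.ρ x = gaux n φ K.ρ L.ρ (T.symm x) := by
  rcases eq_or_ne x 0 with rfl | hx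
  · simp [gaux]
  · set y := T.symm x with hy
    have hy0 : y ≠ 0 := by
      simp only [hy, ne_eq, LinearEquiv.map_eq_zero_iff]
      exact hx
    have hxn : (0:ℝ) < ‖x‖ := norm_pos_iff.2 hx
    have hyn : (0:ℝ) < ‖y‖ := norm_pos_iff.2 hy0
    set u := ‖x‖⁻¹ • x with hu_def
    set v := ‖y‖⁻¹ • y with hv_def
    have hu : ‖u‖ = 1 := by
      rw [hu_def, norm_smul, norm_inv, norm_norm, inv_mul_cancel₀ hxn.ne']
    have hv : ‖v‖ = 1 := by
      rw [hv_def, norm_smul, norm_inv, norm_norm, inv_mul_cancel₀ hyn.ne']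
    have hTu : T.symm u = ‖x‖⁻¹ • y := by rw [hu_def, LinearEquiv.map_smul, hy]
    have hTun : ‖T.symm u‖ = ‖x‖⁻¹ * ‖y‖ := by
      rw [hTu, norm_smul, norm_inv, norm_norm]
    have hTuv : ‖T.symm u‖⁻¹ • T.symm u = v := by
      rw [hTun, hTu, smul_smul, hv_def]
      congr 1
      field_simp
    have hKu := hK u hu
    have hLu := hL u hu
    rw [hTuv, hTun] at hKu hLu
    have hK2 : K'.ρ u * ‖y‖ = K.ρ v * ‖x‖ := by
      have : K'.ρ u * ‖y‖ = (K'.ρ u * (‖x‖⁻¹ * ‖y‖)) * ‖x‖ := by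
        field_simp
      rw [this, hKu]
    have hL2 : L'.ρ u * ‖y‖ = L.ρ v * ‖x‖ := by
      have : L'.ρ u * ‖y‖ = (L'.ρ u * (‖x‖⁻¹ * ‖y‖)) * ‖x‖ := by
        field_simp
      rw [this, hLu]
    have hLpos : 0 < L.ρ v := L.pos v hv
    have hL'pos : 0 < L'.ρ u := L'.pos u hu
    have hKpos : 0 < K.ρ v := K.pos v hv
    have hratio : K'.ρ u / L'.ρ u = K.ρ v / L.ρ v := by
      rw [div_eq_div_iff hL'pos.ne' hLpos.ne']
      apply mul_right_cancel₀ hyn.ne'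
      linear_combination L.ρ v * hK2 - K.ρ v * hL2
    have hcond : (x ≠ 0 ∧ ‖x‖ < K'.ρ u) ↔ (y ≠ 0 ∧ ‖y‖ < K.ρ v) := by
      have h1 : ‖x‖ < K'.ρ u ↔ ‖y‖ < K.ρ v := by
        constructor
        · intro h
          have := (mul_lt_mul_iff_left₀ hyn).2 h
          rw [hK2] at this
          rw [mul_comm] at this
          exact (mul_lt_mul_iff_left₀ hxn).1 this
        · intro h
          have := (mul_lt_mul_iff_left₀ hxn).2 h
          rw [← hK2] at this
          rw [mul_comm ‖y‖ ‖x‖] at this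
          exact (mul_lt_mul_iff_left₀ hyn).1 this
      simp [hx, hy0, h1]
    simp only [gaux, ← hu_def, ← hv_def]
    classical
    exact if_congr hcond (by rw [hratio]) rfl

/-- `SL(n)`-invariance of the Orlicz `L_φ`-dual mixed volume. -/
theorem dual_mixed_volume_sl_invariant {n : ℕ} (φ : ℝ → ℝ)
    (hφc : ContinuousOn φ (Set.Ioi 0)) (hφp : ∀ t : ℝ, 0 < t → 0 < φ t)
    (T : EuclideanSpace ℝ (Fin n) ≃ₗ[ℝ] EuclideanSpace ℝ (Fin n))
    (hT : |LinearMap.det (T : EuclideanSpace ℝ (Fin n) →ₗ[ℝ] EuclideanSpace ℝ (Fin n))| = 1)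
    (K L K' L' : StarBody n)
    (hK : IsLinearImage T K K') (hL : IsLinearImage T L L') :
    dualMixedVolume φ K' L' = dualMixedVolume φ K L := by
  rcases Nat.eq_zero_or_pos n with hn | hn
  · subst hn
    have he : IsEmpty ↥(sphere (0 : EuclideanSpace ℝ (Fin 0)) 1) := by
      refine ⟨fun u => ?_⟩
      have h1 : ‖(u : EuclideanSpace ℝ (Fin 0))‖ = 1 := mem_sphere_zero_iff_norm.1 u.2
      have h0 : (u : EuclideanSpace ℝ (Fin 0)) = 0 := Subsingleton.elim _ _
      rw [h0, norm_zero] at h1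
      exact zero_ne_one h1
    simp [dualMixedVolume, integral_of_isEmpty]
  · have hdet : LinearMap.det (T.symm : EuclideanSpace ℝ (Fin n) →ₗ[ℝ] EuclideanSpace ℝ (Fin n)) ≠ 0 := by
      intro h
      have := LinearEquiv.isUnit_det' T.symm
      rw [h] at this
      exact not_isUnit_zero this
    have habs : |LinearMap.det (T.symm : EuclideanSpace ℝ (Fin n) →ₗ[ℝ] EuclideanSpace ℝ (Fin n))| = 1 := by
      have h1 : LinearMap.det (T.symm : EuclideanSpace ℝ (Fin n) →ₗ[ℝ] EuclideanSpace ℝ (Fin n)) *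
          LinearMap.det (T : EuclideanSpace ℝ (Fin n) →ₗ[ℝ] EuclideanSpace ℝ (Fin n)) = 1 := by
        rw [← LinearMap.det_comp]
        have : (T.symm : EuclideanSpace ℝ (Fin n) →ₗ[ℝ] EuclideanSpace ℝ (Fin n)).comp
            (T : EuclideanSpace ℝ (Fin n) →ₗ[ℝ] EuclideanSpace ℝ (Fin n)) = LinearMap.id := by
          ext x; simp
        rw [this, LinearMap.det_id]
      have := congrArg abs h1
      rwa [abs_mul, hT, mul_one, abs_one] at this
    have hmap : Measure.map (T.symm : EuclideanSpace ℝ (Fin n) → EuclideanSpace ℝ (Fin n)) volume = volume := by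
      rw [show (⇑T.symm : EuclideanSpace ℝ (Fin n) → EuclideanSpace ℝ (Fin n)) =
          ⇑(T.symm : EuclideanSpace ℝ (Fin n) →ₗ[ℝ] EuclideanSpace ℝ (Fin n)) from rfl,
        Measure.map_linearMap_addHaar_eq_smul_addHaar volume hdet, abs_inv, habs]
      simp
    have hmeT : MeasurableEmbedding (T.symm : EuclideanSpace ℝ (Fin n) → EuclideanSpace ℝ (Fin n)) :=
      (T.toContinuousLinearEquiv.symm.toHomeomorph).measurableEmbedding
    have key : ∫ x, gaux n φ K'.ρ L'.ρ x = ∫ x, gaux n φ K.ρ L.ρ x := by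
      calc ∫ x, gaux n φ K'.ρ L'.ρ x = ∫ x, gaux n φ K.ρ L.ρ (T.symm x) := by
              refine integral_congr_ae (Filter.Eventually.of_forall fun x => ?_)
              exact gaux_comp_symm φ T K L K' L' hK hL x
        _ = ∫ x, gaux n φ K.ρ L.ρ x ∂(Measure.map (T.symm : EuclideanSpace ℝ (Fin n) → EuclideanSpace ℝ (Fin n)) volume) := (hmeT.integral_map _).symm
        _ = ∫ x, gaux n φ K.ρ L.ρ x := by rw [hmap]
    rw [← integral_gaux hn φ hφc K L, ← integral_gaux hn φ hφc K' L', key]
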